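/- Let γ > 0, γ ≠ 1, and set z₁ = (1, 1, 0, 1/2, 0, 3/2, 5/2, 0) and z₂ = (γ, 1, 0, 1/(2γ), 0, 3/(2γ), 5/(2γ²), 0) in ℝ⁸. Then the determinant of the 3×3 submatrix formed by the first three rows of Z_𝒜(z₁ − z₂) equals 2(1−γ)(1−1/γ)², which is nonzero; hence Z_𝒜(z₁ − z₂) has rank 3 and z₁ − z₂ does not belong to the wave cone Λ. -/

import Mathlib

open scoped Matrix

noncomputable section

/-- The coefficient matrix `A⁽¹⁾` (time direction) of the linearized full Euler system
`𝒜z = Σᵢ A⁽ⁱ⁾ ∂ᵢ z = 0` for `z = (ρ, m₁, m₂, U₁₁, U₁₂, E, r₁, r₂)`. -/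
def eulerA1 : Matrix (Fin 4) (Fin 8) ℝ :=
  !![1, 0, 0, 0, 0, 0, 0, 0;
     0, 1, 0, 0, 0, 0, 0, 0;
     0, 0, 1, 0, 0, 0, 0, 0;
     0, 0, 0, 0, 0, 1, 0, 0]

/-- The coefficient matrix `A⁽²⁾` (first spatial direction). -/
def eulerA2 : Matrix (Fin 4) (Fin 8) ℝ :=
  !![0, 1, 0, 0, 0, 0, 0, 0;
     0, 0, 0, 1, 0, 1, 0, 0;
     0, 0, 0, 0, 1, 0, 0, 0;
     0, 0, 0, 0, 0, 0, 1, 0]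

/-- The coefficient matrix `A⁽³⁾` (second spatial direction). -/
def eulerA3 : Matrix (Fin 4) (Fin 8) ℝ :=
  !![0, 0, 1, 0, 0, 0, 0, 0;
     0, 0, 0, 0, 1, 0, 0, 0;
     0, 0, 0, -1, 0, 1, 0, 0;
     0, 0, 0, 0, 0, 0, 0, 1]

/-- The three coefficient matrices of the linearized full Euler system. -/
def eulerA : Fin 3 → Matrix (Fin 4) (Fin 8) ℝ := ![eulerA1, eulerA2, eulerA3]

/-- For a state `z = (ρ, m₁, m₂, U₁₁, U₁₂, E, r₁, r₂) ∈ ℝ⁸`, the 4×3 matrix `Z_𝒜(z)`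
with rows `(ρ, m₁, m₂)`, `(m₁, U₁₁+E, U₁₂)`, `(m₂, U₁₂, −U₁₁+E)`, `(E, r₁, r₂)`;
its `i`-th column equals `A⁽ⁱ⁾ z`. -/
def eulerZ (z : Fin 8 → ℝ) : Matrix (Fin 4) (Fin 3) ℝ :=
  !![z 0, z 1, z 2;
     z 1, z 3 + z 5, z 4;
     z 2, z 4, -z 3 + z 5;
     z 5, z 6, z 7]

/-- The wave cone of the linearized full Euler system:
`Λ = {z̄ ∈ ℝ⁸ : ∃ ξ ∈ ℝ³∖{0}, (Σᵢ ξᵢ A⁽ⁱ⁾) z̄ = 0}`. -/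
def eulerWaveCone : Set (Fin 8 → ℝ) :=
  {z | ∃ ξ : Fin 3 → ℝ, ξ ≠ 0 ∧ (∑ i : Fin 3, ξ i • eulerA i) *ᵥ z = 0}

end

private lemma cv0 {α : Type*} (a b c d e f g h : α) : ![a,b,c,d,e,f,g,h] 0 = a := rfl
private lemma cv1 {α : Type*} (a b c d e f g h : α) : ![a,b,c,d,e,f,g,h] 1 = b := rfl
private lemma cv2 {α : Type*} (a b c d e f g h : α) : ![a,b,c,d,e,f,g,h] 2 = c := rfl
private lemma cv3 {α : Type*} (a b c d e f g h : α) : ![a,b,c,d,e,f,g,h] 3 = d := rfl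
private lemma cv4 {α : Type*} (a b c d e f g h : α) : ![a,b,c,d,e,f,g,h] 4 = e := rfl
private lemma cv5 {α : Type*} (a b c d e f g h : α) : ![a,b,c,d,e,f,g,h] 5 = f := rfl
private lemma cv6 {α : Type*} (a b c d e f g h : α) : ![a,b,c,d,e,f,g,h] 6 = g := rfl
private lemma cv7 {α : Type*} (a b c d e f g h : α) : ![a,b,c,d,e,f,g,h] 7 = h := rfl

private lemma rank_submatrix_le' {m n : Type*} [Fintype m] [Fintype n] [DecidableEq n]
    (f : n → m) (A : Matrix m n ℝ) :
    (A.submatrix f id).rank ≤ A.rank := by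
  have h : (A.submatrix f id).mulVecLin = (LinearMap.funLeft ℝ ℝ f).comp A.mulVecLin := by
    apply LinearMap.ext
    intro v
    funext j
    simp [Matrix.mulVecLin, Matrix.mulVec, dotProduct]
  rw [Matrix.rank, Matrix.rank, h, LinearMap.range_comp]
  exact Submodule.finrank_map_le _ _

private lemma eulerZ_mulVec (z : Fin 8 → ℝ) (ξ : Fin 3 → ℝ) :
    (∑ i : Fin 3, ξ i • eulerA i) *ᵥ z = eulerZ z *ᵥ ξ := by
  funext k
  fin_cases k <;>
    simp [eulerA, eulerA1, eulerA2, eulerA3, eulerZ, Matrix.mulVec, dotProduct,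
      Fin.sum_univ_eight, Fin.sum_univ_three,
      cv0, cv1, cv2, cv3, cv4, cv5, cv6, cv7] <;> ring

/-- For `γ > 0`, `γ ≠ 1`, and the two constant states
`z₁ = (1, 1, 0, 1/2, 0, 3/2, 5/2, 0)` and
`z₂ = (γ, 1, 0, 1/(2γ), 0, 3/(2γ), 5/(2γ²), 0)`, the determinant of the 3×3 submatrix
formed by the first three rows of `Z_𝒜(z₁ − z₂)` equals `2(1−γ)(1−1/γ)² ≠ 0`; hence
`Z_𝒜(z₁ − z₂)` has rank 3 and `z₁ − z₂ ∉ Λ`. -/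
theorem constant_states_not_in_waveCone (γ : ℝ) (hγ : 0 < γ) (hγ1 : γ ≠ 1)
    (z₁ z₂ : Fin 8 → ℝ)
    (hz₁ : z₁ = ![1, 1, 0, 1 / 2, 0, 3 / 2, 5 / 2, 0])
    (hz₂ : z₂ = ![γ, 1, 0, 1 / (2 * γ), 0, 3 / (2 * γ), 5 / (2 * γ ^ 2), 0]) :
    Matrix.det ((eulerZ (z₁ - z₂)).submatrix (Fin.castSucc : Fin 3 → Fin 4) id)
        = 2 * (1 - γ) * (1 - 1 / γ) ^ 2 ∧
    2 * (1 - γ) * (1 - 1 / γ) ^ 2 ≠ 0 ∧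
    (eulerZ (z₁ - z₂)).rank = 3 ∧
    z₁ - z₂ ∉ eulerWaveCone := by
  subst hz₁ hz₂
  have hγ0 : γ ≠ 0 := ne_of_gt hγ
  have hM : (eulerZ (![1, 1, 0, 1 / 2, 0, 3 / 2, 5 / 2, 0] -
      ![γ, 1, 0, 1 / (2 * γ), 0, 3 / (2 * γ), 5 / (2 * γ ^ 2), 0])).submatrix
      (Fin.castSucc : Fin 3 → Fin 4) id =
      !![1 - γ, 0, 0; 0, 2 - 2 / γ, 0; 0, 0, 1 - 1 / γ] := by
    ext i j
    fin_cases i <;> fin_cases j <;>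
      simp [eulerZ, Matrix.submatrix_apply, Pi.sub_apply, cv0, cv1, cv2, cv3, cv4, cv5, cv6, cv7,
        show Fin.castSucc (0 : Fin 3) = 0 from rfl, show Fin.castSucc (1 : Fin 3) = 1 from rfl,
        show Fin.castSucc (2 : Fin 3) = 2 from rfl, Matrix.vecHead, Matrix.vecTail] <;> ring
  have hdet : Matrix.det ((eulerZ (![1, 1, 0, 1 / 2, 0, 3 / 2, 5 / 2, 0] -
      ![γ, 1, 0, 1 / (2 * γ), 0, 3 / (2 * γ), 5 / (2 * γ ^ 2), 0])).submatrix
      (Fin.castSucc : Fin 3 → Fin 4) id) = 2 * (1 - γ) * (1 - 1 / γ) ^ 2 := by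
    rw [hM, Matrix.det_fin_three]
    simp
    ring
  have hne : 2 * (1 - γ) * (1 - 1 / γ) ^ 2 ≠ 0 := by
    have h1 : (1 : ℝ) - γ ≠ 0 := sub_ne_zero.mpr (Ne.symm hγ1)
    have h2 : (1 : ℝ) - 1 / γ ≠ 0 := by
      rw [sub_ne_zero]
      intro h
      apply hγ1
      field_simp at h
      linarith
    positivity
  refine ⟨hdet, hne, ?_, ?_⟩
  · apply le_antisymm
    · exact le_of_le_of_eq (Matrix.rank_le_card_width _) (Fintype.card_fin 3)
    · have h3 : ((eulerZ (![1, 1, 0, 1 / 2, 0, 3 / 2, 5 / 2, 0] -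
          ![γ, 1, 0, 1 / (2 * γ), 0, 3 / (2 * γ), 5 / (2 * γ ^ 2), 0])).submatrix
          (Fin.castSucc : Fin 3 → Fin 4) id).rank = 3 := by
        rw [Matrix.rank_of_isUnit]
        · simp
        · rw [Matrix.isUnit_iff_isUnit_det, isUnit_iff_ne_zero, hdet]
          exact hne
      calc (3 : ℕ) = _ := h3.symm
        _ ≤ _ := rank_submatrix_le' _ _
  · rintro ⟨ξ, hξ, h0⟩
    rw [eulerZ_mulVec] at h0
    have hMv : ((eulerZ (![1, 1, 0, 1 / 2, 0, 3 / 2, 5 / 2, 0] -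
        ![γ, 1, 0, 1 / (2 * γ), 0, 3 / (2 * γ), 5 / (2 * γ ^ 2), 0])).submatrix
        (Fin.castSucc : Fin 3 → Fin 4) id) *ᵥ ξ = 0 := by
      funext j
      have := congrFun h0 (Fin.castSucc j)
      simpa [Matrix.mulVec, dotProduct, Matrix.submatrix] using this
    have hdne : Matrix.det ((eulerZ (![1, 1, 0, 1 / 2, 0, 3 / 2, 5 / 2, 0] -
        ![γ, 1, 0, 1 / (2 * γ), 0, 3 / (2 * γ), 5 / (2 * γ ^ 2), 0])).submatrix
        (Fin.castSucc : Fin 3 → Fin 4) id) ≠ 0 := by rw [hdet]; exact hne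
    exact hξ (Matrix.eq_zero_of_mulVec_eq_zero hdne hMv)
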